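/- arXiv:1610.04070 — 4 statements merged into one kernel-verified Lean document; each statement's English description precedes it below -/
import Mathlib

section
/- Let d ≥ 1, let p > 1 and α > 0 be real numbers, let c ∈ ℝ, and let M be an invertible real d×d matrix. Then the two conditions M⁻¹·M⁻ᵀ = c·I and M⁻¹e₁ = α^{p−1}c·e₁ (where e₁ is the first standard basis vector) hold simultaneously if and only if c = α^{2−2p} and M = α^{p−1}·O for some orthogonal d×d matrix O with O·e₁ = e₁. -/
open Matrix

/-- The matrix conditions `M⁻¹ M⁻ᵀ = c I` and
`M⁻¹ e₁ = α^(p-1) c e₁` hold iff `c = α^(2-2p)` and `M = α^(p-1) O` for some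
orthogonal `O` fixing `e₁`. -/
theorem stmt_0 (d : ℕ) (hd : 1 ≤ d) (p α c : ℝ) (hp : 1 < p) (hα : 0 < α)
    (M : Matrix (Fin d) (Fin d) ℝ) (hM : IsUnit M) :
    (M⁻¹ * (M⁻¹)ᵀ = c • (1 : Matrix (Fin d) (Fin d) ℝ) ∧
        M⁻¹.mulVec (Pi.single (⟨0, hd⟩ : Fin d) 1 : Fin d → ℝ) =
          (α ^ (p - 1) * c) • (Pi.single (⟨0, hd⟩ : Fin d) 1 : Fin d → ℝ)) ↔
      (c = α ^ (2 - 2 * p) ∧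
        ∃ O ∈ Matrix.orthogonalGroup (Fin d) ℝ,
          M = α ^ (p - 1) • O ∧
            O.mulVec (Pi.single (⟨0, hd⟩ : Fin d) 1 : Fin d → ℝ) =
              (Pi.single (⟨0, hd⟩ : Fin d) 1 : Fin d → ℝ)) := by
  set e : Fin d → ℝ := Pi.single (⟨0, hd⟩ : Fin d) 1 with he
  set β : ℝ := α ^ (p - 1) with hβdef
  have hβ : 0 < β := Real.rpow_pos_of_pos hα _
  have hee : e ⬝ᵥ e = 1 := by simp [he]
  have hMd : IsUnit M.det := (Matrix.isUnit_iff_isUnit_det M).mp hM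
  have hMM : M⁻¹ * M = 1 := Matrix.nonsing_inv_mul M hMd
  have hMM' : M * M⁻¹ = 1 := Matrix.mul_nonsing_inv M hMd
  have hcβ : α ^ (2 - 2 * p) * (β * β) = 1 := by
    rw [hβdef, ← Real.rpow_add hα, ← Real.rpow_add hα,
      show (2 - 2 * p) + ((p - 1) + (p - 1)) = 0 by ring, Real.rpow_zero]
  constructor
  · rintro ⟨h1, h2⟩
    have hc0 : c ≠ 0 := by
      rintro rfl
      rw [zero_smul] at h1
      have h3 : (M⁻¹)ᵀ = 0 := by
        calc (M⁻¹)ᵀ = (M * M⁻¹) * (M⁻¹)ᵀ := by rw [hMM', one_mul]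
        _ = M * (M⁻¹ * (M⁻¹)ᵀ) := by rw [mul_assoc]
        _ = 0 := by rw [h1, mul_zero]
      have h4 : M⁻¹ = 0 := by
        have := congrArg Matrix.transpose h3
        simpa using this
      rw [h4, zero_mul] at hMM
      have := congrFun (congrFun hMM ⟨0, hd⟩) ⟨0, hd⟩
      simp [Matrix.one_apply] at this
    -- M⁻¹ = c • Mᵀ
    have hB : M⁻¹ = c • Mᵀ := by
      calc M⁻¹ = (M⁻¹ * (M⁻¹)ᵀ) * Mᵀ := by
            rw [mul_assoc, ← Matrix.transpose_mul, hMM', Matrix.transpose_one, mul_one]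
      _ = c • Mᵀ := by rw [h1, Matrix.smul_mul, one_mul]
    -- Mᵀ e = β e
    have hMtE : Mᵀ *ᵥ e = β • e := by
      have h5 : c • (Mᵀ *ᵥ e) = c • (β • e) := by
        rw [← Matrix.smul_mulVec, ← hB, h2, smul_smul, mul_comm β c]
      exact smul_right_injective (Fin d → ℝ) hc0 h5
    -- Mᵀ M = c⁻¹ I, M Mᵀ = c⁻¹ I
    have hMt : Mᵀ = c⁻¹ • M⁻¹ := by
      rw [hB, smul_smul, inv_mul_cancel₀ hc0, one_smul]
    have hMtM : Mᵀ * M = c⁻¹ • 1 := by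
      rw [hMt, Matrix.smul_mul, hMM]
    have hMMt : M * Mᵀ = c⁻¹ • 1 := by
      rw [hMt, Matrix.mul_smul, hMM']
    -- c⁻¹ = β²
    have hE : c⁻¹ = β * β := by
      have h5 : e ⬝ᵥ ((M * Mᵀ) *ᵥ e) = c⁻¹ := by
        rw [hMMt, Matrix.smul_mulVec, Matrix.one_mulVec, dotProduct_smul,
          hee, smul_eq_mul, mul_one]
      have h6 : e ⬝ᵥ ((M * Mᵀ) *ᵥ e) = β * β := by
        rw [← Matrix.mulVec_mulVec, hMtE, Matrix.mulVec_smul, dotProduct_smul,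
          Matrix.dotProduct_mulVec, ← Matrix.mulVec_transpose, hMtE, smul_dotProduct, hee]
        simp
      rw [← h5, h6]
    have hc : c = α ^ (2 - 2 * p) := by
      have h7 : c * (β * β) = 1 := by rw [← hE, mul_inv_cancel₀ hc0]
      have hββ : β * β ≠ 0 := by positivity
      exact mul_right_cancel₀ hββ (h7.trans hcβ.symm)
    refine ⟨hc, β⁻¹ • M, ?_, ?_, ?_⟩
    · suffices h : (β⁻¹ • M)ᵀ * (β⁻¹ • M) = 1 by
        rw [mem_orthogonalGroup_iff']
        simpa using h
      rw [Matrix.transpose_smul, Matrix.smul_mul, Matrix.mul_smul, hMtM, hE,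
        smul_smul, smul_smul, show β⁻¹ * β⁻¹ * (β * β) = 1 by field_simp, one_smul]
    · rw [smul_smul, mul_inv_cancel₀ hβ.ne', one_smul]
    · have hOte : (β⁻¹ • M)ᵀ *ᵥ e = e := by
        rw [Matrix.transpose_smul, Matrix.smul_mulVec, hMtE, smul_smul,
          inv_mul_cancel₀ hβ.ne', one_smul]
      have hOtO : (β⁻¹ • M)ᵀ * (β⁻¹ • M) = 1 := by
        rw [Matrix.transpose_smul, Matrix.smul_mul, Matrix.mul_smul, hMtM, hE,
          smul_smul, smul_smul, show β⁻¹ * β⁻¹ * (β * β) = 1 by field_simp, one_smul]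
      have hOOt : (β⁻¹ • M) * (β⁻¹ • M)ᵀ = 1 := mul_eq_one_comm.mpr hOtO
      calc (β⁻¹ • M) *ᵥ e = (β⁻¹ • M) *ᵥ ((β⁻¹ • M)ᵀ *ᵥ e) := by rw [hOte]
      _ = ((β⁻¹ • M) * (β⁻¹ • M)ᵀ) *ᵥ e := by rw [Matrix.mulVec_mulVec]
      _ = e := by rw [hOOt, Matrix.one_mulVec]
  · rintro ⟨hc, O, hOmem, hMO, hOe⟩
    have hOtO : Oᵀ * O = 1 := by
      rw [mem_orthogonalGroup_iff'] at hOmem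
      simpa using hOmem
    have hMinv : M⁻¹ = β⁻¹ • Oᵀ := by
      apply Matrix.inv_eq_left_inv
      rw [hMO, Matrix.smul_mul, Matrix.mul_smul, hOtO, smul_smul,
        inv_mul_cancel₀ hβ.ne', one_smul]
    have hOte : Oᵀ *ᵥ e = e := by
      calc Oᵀ *ᵥ e = Oᵀ *ᵥ (O *ᵥ e) := by rw [hOe]
      _ = (Oᵀ * O) *ᵥ e := by rw [Matrix.mulVec_mulVec]
      _ = e := by rw [hOtO, Matrix.one_mulVec]
    have hcval : c = β⁻¹ * β⁻¹ := by
      rw [hc]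
      field_simp
      linarith [hcβ, show α ^ (2 * (1 - p)) * β ^ 2 = α ^ (2 - 2 * p) * (β * β) by
        rw [show 2 * (1 - p) = 2 - 2 * p by ring, sq]]
    constructor
    · rw [hMinv, Matrix.transpose_smul, Matrix.transpose_transpose, Matrix.smul_mul,
        Matrix.mul_smul, hOtO, smul_smul, hcval]
    · rw [hMinv, Matrix.smul_mulVec, hOte, hcval,
        show β * (β⁻¹ * β⁻¹) = β⁻¹ by field_simp]
end

section
/- Let n ≥ 1, let a ∈ ℝ, let S be a skew-symmetric real n×n matrix, let v₁ ∈ ℝ, and let v₂ ∈ ℝⁿ. Consider the real (n+2)×(n+2) block matrix m with blocks m = [[a, 0, v₁], [0, a·Iₙ + S, v₂], [0, 0, 0]] (first block of size 1×1, middle block n×n, last block 1×1). Then its matrix exponential is exp(m) = [[e^a, 0, Σ_{k=0}^∞ a^k v₁/(k+1)!], [0, e^a·exp(S), Σ_{k=0}^∞ (a·Iₙ+S)^k v₂/(k+1)!], [0, 0, 1]]. -/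
open scoped Nat Matrix

/-- The `(n+2)×(n+2)` block matrix `[[a, 0, v₁], [0, B, v₂], [0, 0, c]]` with a
`1×1` block, an `n×n` block and a `1×1` block on the diagonal. -/
def blk3 (n : ℕ) (a : ℝ) (B : Matrix (Fin n) (Fin n) ℝ) (v₁ : ℝ)
    (v₂ : Fin n → ℝ) (c : ℝ) :
    Matrix (Unit ⊕ Fin n ⊕ Unit) (Unit ⊕ Fin n ⊕ Unit) ℝ :=
  Matrix.of fun i j =>
    match i, j with
    | Sum.inl _, Sum.inl _ => a
    | Sum.inl _, Sum.inr (Sum.inl _) => 0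
    | Sum.inl _, Sum.inr (Sum.inr _) => v₁
    | Sum.inr (Sum.inl _), Sum.inl _ => 0
    | Sum.inr (Sum.inl i), Sum.inr (Sum.inl j) => B i j
    | Sum.inr (Sum.inl i), Sum.inr (Sum.inr _) => v₂ i
    | Sum.inr (Sum.inr _), Sum.inl _ => 0
    | Sum.inr (Sum.inr _), Sum.inr (Sum.inl _) => 0
    | Sum.inr (Sum.inr _), Sum.inr (Sum.inr _) => c

lemma blk3_mul (n : ℕ) (a a' v₁ v₁' c c' : ℝ) (B B' : Matrix (Fin n) (Fin n) ℝ)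
    (v₂ v₂' : Fin n → ℝ) :
    blk3 n a B v₁ v₂ c * blk3 n a' B' v₁' v₂' c' =
      blk3 n (a * a') (B * B') (a * v₁' + v₁ * c')
        (B.mulVec v₂' + c' • v₂) (c * c') := by
  ext i j
  rcases i with _ | i | _ <;> rcases j with _ | j | _ <;>
    simp [blk3, Matrix.mul_apply, Fintype.sum_sum_type, Matrix.mulVec, dotProduct,
      mul_comm]

lemma blk3_one (n : ℕ) :
    (1 : Matrix (Unit ⊕ Fin n ⊕ Unit) (Unit ⊕ Fin n ⊕ Unit) ℝ) = blk3 n 1 1 0 0 1 := by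
  ext i j
  rcases i with _ | i | _ <;> rcases j with _ | j | _ <;>
    simp [blk3, Matrix.one_apply]

lemma blk3_pow (n : ℕ) (a v₁ : ℝ) (B : Matrix (Fin n) (Fin n) ℝ) (v₂ : Fin n → ℝ) (k : ℕ) :
    blk3 n a B v₁ v₂ 0 ^ (k + 1) =
      blk3 n (a ^ (k + 1)) (B ^ (k + 1)) (a ^ k * v₁) ((B ^ k).mulVec v₂) 0 := by
  induction k with
  | zero => simp [Matrix.one_mulVec]
  | succ k ih =>
      rw [pow_succ, ih, blk3_mul]
      simp only [mul_zero, add_zero, zero_smul, ← pow_succ]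

lemma hasSum_shift {f : ℕ → ℝ} {T : ℝ} (h : HasSum (fun k => f (k + 1)) T) (h0 : f 0 = 0) :
    HasSum f T := by
  have h2 := (hasSum_nat_add_iff (f := f) 1).1 h
  simpa [h0] using h2

/-- Explicit matrix exponential of the Lie-algebra element
`m = [[a, 0, v₁], [0, aI+S, v₂], [0, 0, 0]]` with `S` skew-symmetric:
`exp m = [[e^a, 0, Σ a^k v₁/(k+1)!], [0, e^a exp S, Σ (aI+S)^k v₂/(k+1)!], [0,0,1]]`. -/
theorem stmt_12 (n : ℕ) (hn : 1 ≤ n) (a v₁ : ℝ) (S : Matrix (Fin n) (Fin n) ℝ)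
    (hS : Sᵀ = -S) (v₂ : Fin n → ℝ) :
    NormedSpace.exp
        (blk3 n a (a • (1 : Matrix (Fin n) (Fin n) ℝ) + S) v₁ v₂ 0) =
      blk3 n (Real.exp a) (Real.exp a • NormedSpace.exp S)
        (∑' k : ℕ, a ^ k * v₁ / ((k + 1)! : ℝ))
        (∑' k : ℕ, (((k + 1)! : ℝ))⁻¹ •
          ((a • (1 : Matrix (Fin n) (Fin n) ℝ) + S) ^ k).mulVec v₂)
        1 := by
  haveI : Nonempty (Fin n) := Fin.pos_iff_nonempty.mp hn
  set B : Matrix (Fin n) (Fin n) ℝ := a • (1 : Matrix (Fin n) (Fin n) ℝ) + S with hB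
  letI : NormedRing (Matrix (Fin n) (Fin n) ℝ) := Matrix.linftyOpNormedRing
  letI : NormedAlgebra ℝ (Matrix (Fin n) (Fin n) ℝ) := Matrix.linftyOpNormedAlgebra
  letI : NormedAlgebra ℚ (Matrix (Fin n) (Fin n) ℝ) := Matrix.linftyOpNormedAlgebra
  haveI : NormOneClass (Matrix (Fin n) (Fin n) ℝ) := Matrix.linfty_opNormOneClass
  -- exp of the middle block
  have hexpB : NormedSpace.exp B = Real.exp a • NormedSpace.exp S := by
    rw [hB]
    erw [NormedSpace.exp_add_of_commute ((Commute.one_left S).smul_left a)]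
    have h1 : a • (1 : Matrix (Fin n) (Fin n) ℝ) = algebraMap ℝ _ a :=
      (Algebra.algebraMap_eq_smul_one a).symm
    rw [h1, ← NormedSpace.algebraMap_exp_comm, ← Real.exp_eq_exp_ℝ,
      Algebra.algebraMap_eq_smul_one, smul_mul_assoc, one_mul]
    rfl
  -- matrix-level HasSum for B
  have hsumB : HasSum (fun k : ℕ => (k !⁻¹ : ℝ) • B ^ k) (Real.exp a • NormedSpace.exp S) := by
    rw [← hexpB]
    have h := NormedSpace.expSeries_hasSum_exp (𝕂 := ℝ) B
    rwa [NormedSpace.expSeries_apply_eq'] at h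
  -- summability of the translation-part vector series
  have hfac : ∀ k : ℕ, (((k + 1)! : ℝ))⁻¹ ≤ ((k ! : ℕ) : ℝ)⁻¹ := by
    intro k
    apply inv_anti₀ (by positivity)
    exact_mod_cast Nat.factorial_le (Nat.le_succ k)
  have hv2 : Summable (fun k : ℕ => (((k + 1)! : ℝ))⁻¹ • (B ^ k).mulVec v₂) := by
    apply Summable.of_norm
    refine Summable.of_nonneg_of_le (fun k => norm_nonneg _) (fun k => ?_)
      ((Real.summable_pow_div_factorial ‖B‖).mul_left ‖v₂‖)
    rw [norm_smul, Real.norm_eq_abs, abs_of_nonneg (by positivity)]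
    have h2 : ‖(B ^ k).mulVec v₂‖ ≤ ‖B‖ ^ k * ‖v₂‖ :=
      (Matrix.linfty_opNorm_mulVec _ _).trans
        (mul_le_mul_of_nonneg_right (norm_pow_le _ _) (norm_nonneg _))
    calc (((k + 1)! : ℝ))⁻¹ * ‖(B ^ k).mulVec v₂‖
        ≤ ((k ! : ℕ) : ℝ)⁻¹ * (‖B‖ ^ k * ‖v₂‖) := by
          apply mul_le_mul (hfac k) h2 (norm_nonneg _) (by positivity)
      _ = ‖v₂‖ * (‖B‖ ^ k / (k ! : ℕ)) := by
          rw [div_eq_mul_inv]; ring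
  have hv1 : Summable (fun k : ℕ => a ^ k * v₁ / ((k + 1)! : ℝ)) := by
    apply Summable.of_norm
    refine Summable.of_nonneg_of_le (fun k => norm_nonneg _) (fun k => ?_)
      ((Real.summable_pow_div_factorial |a|).mul_left |v₁|)
    rw [Real.norm_eq_abs, abs_div, abs_mul, abs_pow,
      abs_of_nonneg (by positivity : (0:ℝ) ≤ ((k + 1)! : ℝ)), div_eq_mul_inv]
    calc |a| ^ k * |v₁| * (((k + 1)! : ℝ))⁻¹
        ≤ |a| ^ k * |v₁| * ((k ! : ℕ) : ℝ)⁻¹ := by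
          apply mul_le_mul_of_nonneg_left (hfac k) (by positivity)
      _ = |v₁| * (|a| ^ k / (k ! : ℕ)) := by rw [div_eq_mul_inv]; ring
  -- the scalar exponential series
  have hsa : HasSum (fun k : ℕ => (k !⁻¹ : ℝ) * a ^ k) (Real.exp a) := by
    have h := NormedSpace.expSeries_hasSum_exp (𝕂 := ℝ) a
    rw [NormedSpace.expSeries_apply_eq'] at h
    simpa [Real.exp_eq_exp_ℝ, smul_eq_mul] using h
  rw [NormedSpace.exp_eq_tsum ℝ]
  refine HasSum.tsum_eq (Pi.hasSum.2 fun i => Pi.hasSum.2 fun j => ?_)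
  rcases i with _ | i | _ <;> rcases j with _ | j | _
  · -- (inl, inl)
    refine hsa.congr_fun fun k => ?_
    cases k with
    | zero => simp [blk3]
    | succ k => rw [blk3_pow]; simp [blk3]
  · -- (inl, inr inl j)
    refine hasSum_zero.congr_fun fun k => ?_
    cases k with
    | zero => simp [blk3, Matrix.one_apply]
    | succ k => rw [blk3_pow]; simp [blk3]
  · -- (inl, inr inr) : v₁-entry
    refine hasSum_shift ((hv1.hasSum.congr_fun fun k => ?_)) ?_
    · rw [blk3_pow]
      simp [blk3, div_eq_mul_inv]
      ring
    · simp [blk3, Matrix.one_apply]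
  · -- (inr inl i, inl)
    refine hasSum_zero.congr_fun fun k => ?_
    cases k with
    | zero => simp [blk3, Matrix.one_apply]
    | succ k => rw [blk3_pow]; simp [blk3]
  · -- middle block
    refine (Pi.hasSum.1 (Pi.hasSum.1 hsumB i) j).congr_fun fun k => ?_
    cases k with
    | zero => simp [blk3, Matrix.one_apply]
    | succ k => rw [blk3_pow]; simp [blk3]
  · -- (inr inl i, inr inr) : v₂-entry
    refine hasSum_shift ((Pi.hasSum.1 hv2.hasSum i).congr_fun fun k => ?_) ?_
    · rw [blk3_pow]
      simp [blk3]
    · simp [blk3, Matrix.one_apply]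
  · -- (inr inr, inl)
    refine hasSum_zero.congr_fun fun k => ?_
    cases k with
    | zero => simp [blk3, Matrix.one_apply]
    | succ k => rw [blk3_pow]; simp [blk3]
  · -- (inr inr, inr inl j)
    refine hasSum_zero.congr_fun fun k => ?_
    cases k with
    | zero => simp [blk3, Matrix.one_apply]
    | succ k => rw [blk3_pow]; simp [blk3]
  · -- (inr inr, inr inr)
    have hz : ∀ k : ℕ, k ≠ 0 → ((k !⁻¹ : ℝ) • blk3 n a B v₁ v₂ 0 ^ k)
        (Sum.inr (Sum.inr ())) (Sum.inr (Sum.inr ())) = 0 := by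
      intro k hk
      obtain ⟨k, rfl⟩ := Nat.exists_eq_succ_of_ne_zero hk
      simp only [Nat.succ_eq_add_one]
      rw [blk3_pow]; simp [blk3]
    have h := hasSum_single (f := fun k : ℕ => ((k !⁻¹ : ℝ) • blk3 n a B v₁ v₂ 0 ^ k)
        (Sum.inr (Sum.inr ())) (Sum.inr (Sum.inr ()))) 0 hz
    simpa [blk3] using h
end

section
/- Let p > 1, ν ∈ ℝ, T̂ ∈ (0,∞], T ∈ (0,∞]. Let μ₁, μ₃ : [0,T̂) → ℝ be continuous; let α, b : [0,T̂) → ℝ be continuously differentiable with α(0)=1, b(0)=0, α' = α·μ₁, b' = α^{p−1}·μ₃, and α > 0 on [0,T̂); let σ : [0,T) → [0,T̂) be continuously differentiable with σ(0)=0 and σ'(t) = α(σ(t))^{2−2p}. Let v : ℝ × [0,T̂) → ℝ have continuous partial derivatives v_ξ, v_{ξξ}, v_τ (jointly continuous, v continuously differentiable in (ξ,τ)), and suppose v satisfies the co-moving equation v_τ(ξ,τ) = ν·v_{ξξ}(ξ,τ) − |v(ξ,τ)|^{p−1}·sgn(v(ξ,τ))·v_ξ(ξ,τ) + μ₁(τ)·(v(ξ,τ)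 + (p−1)·ξ·v_ξ(ξ,τ)) + μ₃(τ)·v_ξ(ξ,τ) for all ξ ∈ ℝ, τ ∈ (0,T̂). Then the function u(x,t) = α(σ(t))⁻¹ · v(α(σ(t))^{1−p}·(x − b(σ(t))), σ(t)) satisfies the one-dimensional generalized Burgers' equation u_t(x,t) = ν·u_{xx}(x,t) − |u(x,t)|^{p−1}·sgn(u(x,t))·u_x(x,t) for all x ∈ ℝ and t ∈ (0,T). -/
/-- The half-open time interval `[0, T)`, where `T ∈ (0, ∞]` is an extended real. -/
def tIval (T : EReal) : Set ℝ := {t : ℝ | 0 ≤ t ∧ (t : EReal) < T}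

/-- The reconstruction of the original solution from the frozen profile `v`:
`u(x,t) = α(σ(t))⁻¹ v(α(σ(t))^(1−p)(x − b(σ(t))), σ(t))`. -/
noncomputable def reconU (p : ℝ) (α b σ : ℝ → ℝ) (v : ℝ → ℝ → ℝ) (x t : ℝ) : ℝ :=
  (α (σ t))⁻¹ * v (α (σ t) ^ (1 - p) * (x - b (σ t))) (σ t)

open Filter Asymptotics

lemma tIval_mem_nhds {T : EReal} {t : ℝ} (ht0 : 0 < t) (htT : (t : EReal) < T) :
    tIval T ∈ nhds t := by
  have hopen : IsOpen {s : ℝ | 0 < s ∧ (s : EReal) < T} := by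
    have h1 : IsOpen {s : ℝ | 0 < s} := isOpen_lt continuous_const continuous_id
    have h2 : IsOpen {s : ℝ | (s : EReal) < T} := isOpen_Iio.preimage continuous_coe_real_ereal
    exact h1.inter h2
  exact Filter.mem_of_superset (hopen.mem_nhds ⟨ht0, htT⟩) (fun s hs => ⟨hs.1.le, hs.2⟩)

lemma tIval_convex (T : EReal) : Convex ℝ (tIval T) := by
  have h : (tIval T).OrdConnected := by
    constructor
    intro x hx y hy z hz
    exact ⟨hx.1.trans hz.1, lt_of_le_of_lt (EReal.coe_le_coe_iff.2 hz.2) hy.2⟩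
  exact h.convex

lemma real_sign_pos_mul {c x : ℝ} (hc : 0 < c) : Real.sign (c * x) = Real.sign x := by
  rcases lt_trichotomy x 0 with h | h | h
  · rw [Real.sign_of_neg h, Real.sign_of_neg (mul_neg_of_pos_of_neg hc h)]
  · simp [h]
  · rw [Real.sign_of_pos h, Real.sign_of_pos (mul_pos hc h)]

lemma chain2 {v vξ : ℝ → ℝ → ℝ} {U : Set ℝ} {τ₀ ξ₀ d Ξ' : ℝ} {Ξ : ℝ → ℝ}
    (hU : U ∈ nhds τ₀)
    (hvξ : ∀ (s : ℝ), ∀ τ ∈ U, HasDerivAt (fun s' => v s' τ) (vξ s τ) s)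
    (hvτ : HasDerivAt (fun τ => v ξ₀ τ) d τ₀)
    (hvξc : ContinuousAt (fun q : ℝ × ℝ => vξ q.1 q.2) (ξ₀, τ₀))
    (hΞ : HasDerivAt Ξ Ξ' τ₀) (hΞ0 : Ξ τ₀ = ξ₀) :
    HasDerivAt (fun τ => v (Ξ τ) τ) (vξ ξ₀ τ₀ * Ξ' + d) τ₀ := by
  have h2 : HasDerivAt (fun τ => vξ ξ₀ τ₀ * (Ξ τ - ξ₀)) (vξ ξ₀ τ₀ * Ξ') τ₀ := by
    simpa using ((hΞ.sub_const ξ₀).const_mul (vξ ξ₀ τ₀))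
  have hψ : HasDerivAt (fun τ => v (Ξ τ) τ - v ξ₀ τ - vξ ξ₀ τ₀ * (Ξ τ - ξ₀)) 0 τ₀ := by
    rw [hasDerivAt_iff_isLittleO]
    have hψ0 : v (Ξ τ₀) τ₀ - v ξ₀ τ₀ - vξ ξ₀ τ₀ * (Ξ τ₀ - ξ₀) = 0 := by rw [hΞ0]; ring
    rw [isLittleO_iff]
    intro c hc
    have hCpos : (0:ℝ) < |Ξ'| + 1 := by positivity
    set C := |Ξ'| + 1 with hCdef
    have hΞle : ∀ᶠ τ in nhds τ₀, |Ξ τ - ξ₀| ≤ C * |τ - τ₀| := by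
      have hO := hasDerivAt_iff_isLittleO.1 hΞ
      rw [isLittleO_iff] at hO
      filter_upwards [hO one_pos] with τ h
      rw [Real.norm_eq_abs, Real.norm_eq_abs, hΞ0] at h
      have h1 : |Ξ τ - ξ₀| ≤ |Ξ τ - ξ₀ - (τ - τ₀) * Ξ'| + |(τ - τ₀) * Ξ'| := by
        have := abs_add_le (Ξ τ - ξ₀ - (τ - τ₀) * Ξ') ((τ - τ₀) * Ξ')
        simpa using this
      have h2' : |(τ - τ₀) * Ξ'| = |τ - τ₀| * |Ξ'| := abs_mul _ _
      have h3 : |Ξ τ - ξ₀ - (τ - τ₀) * Ξ'| ≤ 1 * |τ - τ₀| := by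
        simpa [smul_eq_mul, mul_comm] using h
      rw [hCdef]; nlinarith [abs_nonneg (τ - τ₀), abs_nonneg Ξ']
    have hεpos : 0 < c / C := div_pos hc hCpos
    have hev : ∀ᶠ q : ℝ × ℝ in nhds (ξ₀, τ₀), |vξ q.1 q.2 - vξ ξ₀ τ₀| ≤ c / C := by
      have := hvξc (Metric.closedBall_mem_nhds (vξ ξ₀ τ₀) hεpos)
      filter_upwards [this] with q hq
      have : dist (vξ q.1 q.2) (vξ ξ₀ τ₀) ≤ c / C := hq
      rwa [Real.dist_eq] at this
    obtain ⟨U1, hU1, U2, hU2, hsub⟩ := mem_nhds_prod_iff.1 hev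
    obtain ⟨δ, hδpos, hball⟩ := Metric.mem_nhds_iff.1 hU1
    have hΞball : ∀ᶠ τ in nhds τ₀, Ξ τ ∈ Metric.ball ξ₀ δ := by
      have hc' : ContinuousAt Ξ τ₀ := hΞ.continuousAt
      have := hc' (Metric.ball_mem_nhds (Ξ τ₀) hδpos)
      rw [hΞ0] at this
      exact this
    filter_upwards [hU, hU2, hΞball, hΞle] with τ hτU hτU2 hτball hle
    have hseg : segment ℝ ξ₀ (Ξ τ) ⊆ Metric.ball ξ₀ δ :=
      (convex_ball ξ₀ δ).segment_subset (Metric.mem_ball_self hδpos) hτball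
    have hderiv : ∀ s ∈ segment ℝ ξ₀ (Ξ τ),
        HasDerivWithinAt (fun s' => v s' τ - vξ ξ₀ τ₀ * s') (vξ s τ - vξ ξ₀ τ₀)
          (segment ℝ ξ₀ (Ξ τ)) s := by
      intro s _
      have h1 := (hvξ s τ hτU).sub ((hasDerivAt_id s).const_mul (vξ ξ₀ τ₀))
      rw [mul_one] at h1
      exact h1.hasDerivWithinAt
    have hbound : ∀ s ∈ segment ℝ ξ₀ (Ξ τ), ‖vξ s τ - vξ ξ₀ τ₀‖ ≤ c / C := by
      intro s hs
      have hsU1 : s ∈ U1 := hball (hseg hs)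
      have hmem : ((s, τ) : ℝ × ℝ) ∈ U1 ×ˢ U2 := ⟨hsU1, hτU2⟩
      have := hsub hmem
      simpa [Real.norm_eq_abs] using this
    have key := Convex.norm_image_sub_le_of_norm_hasDerivWithin_le hderiv hbound
      (convex_segment ξ₀ (Ξ τ)) (left_mem_segment ℝ ξ₀ (Ξ τ)) (right_mem_segment ℝ ξ₀ (Ξ τ))
    rw [Real.norm_eq_abs, Real.norm_eq_abs] at key
    have keq : (v (Ξ τ) τ - vξ ξ₀ τ₀ * Ξ τ) - (v ξ₀ τ - vξ ξ₀ τ₀ * ξ₀)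
        = v (Ξ τ) τ - v ξ₀ τ - vξ ξ₀ τ₀ * (Ξ τ - ξ₀) := by ring
    rw [keq] at key
    have hstep : |v (Ξ τ) τ - v ξ₀ τ - vξ ξ₀ τ₀ * (Ξ τ - ξ₀)| ≤ c / C * (C * |τ - τ₀|) := by
      calc |v (Ξ τ) τ - v ξ₀ τ - vξ ξ₀ τ₀ * (Ξ τ - ξ₀)| ≤ c / C * |Ξ τ - ξ₀| := key
        _ ≤ c / C * (C * |τ - τ₀|) := mul_le_mul_of_nonneg_left hle hεpos.le
    have hCC : c / C * (C * |τ - τ₀|) = c * |τ - τ₀| := by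
      field_simp
    rw [hCC] at hstep
    simpa [Real.norm_eq_abs, hψ0] using hstep
  have hsum := (hψ.add h2).add hvτ
  have hfun : (fun τ => (v (Ξ τ) τ - v ξ₀ τ - vξ ξ₀ τ₀ * (Ξ τ - ξ₀)
      + vξ ξ₀ τ₀ * (Ξ τ - ξ₀)) + v ξ₀ τ) = fun τ => v (Ξ τ) τ := by
    funext τ; ring
  rw [← hfun]; rw [zero_add] at hsum
  exact hsum

/-- (Freezing method, reconstruction direction.) If `v` solves
the co-moving equation
`v_τ = ν v_ξξ − |v|^(p−1) sgn(v) v_ξ + μ₁(v + (p−1)ξ v_ξ) + μ₃ v_ξ`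
and `α, b, σ` solve the reconstruction ODEs `α' = αμ₁`, `b' = α^(p−1)μ₃`,
`σ' = α(σ)^(2−2p)`, then `u(x,t) = α(σ(t))⁻¹ v(α(σ(t))^(1−p)(x−b(σ(t))), σ(t))`
solves the generalized Burgers' equation
`u_t = ν u_xx − |u|^(p−1) sgn(u) u_x`. -/
theorem stmt_16 (p ν : ℝ) (hp : 1 < p) (That T : EReal)
    (hThat : 0 < That) (hT : 0 < T)
    (μ₁ μ₃ : ℝ → ℝ)
    (hμ₁ : ContinuousOn μ₁ (tIval That)) (hμ₃ : ContinuousOn μ₃ (tIval That))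
    (α b : ℝ → ℝ) (hα0 : α 0 = 1) (hb0 : b 0 = 0)
    (hαpos : ∀ τ ∈ tIval That, 0 < α τ)
    (hα' : ∀ τ ∈ tIval That, HasDerivWithinAt α (α τ * μ₁ τ) (tIval That) τ)
    (hb' : ∀ τ ∈ tIval That,
      HasDerivWithinAt b (α τ ^ (p - 1) * μ₃ τ) (tIval That) τ)
    (σ : ℝ → ℝ) (hσ0 : σ 0 = 0) (hσmem : ∀ t ∈ tIval T, σ t ∈ tIval That)
    (hσ' : ∀ t ∈ tIval T,
      HasDerivWithinAt σ (α (σ t) ^ (2 - 2 * p)) (tIval T) t)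
    (v vξ vξξ vτ : ℝ → ℝ → ℝ)
    (hvξ : ∀ (ξ : ℝ), ∀ τ ∈ tIval That,
      HasDerivAt (fun ξ' => v ξ' τ) (vξ ξ τ) ξ)
    (hvξξ : ∀ (ξ : ℝ), ∀ τ ∈ tIval That,
      HasDerivAt (fun ξ' => vξ ξ' τ) (vξξ ξ τ) ξ)
    (hvτ : ∀ (ξ : ℝ), ∀ τ ∈ tIval That,
      HasDerivWithinAt (fun τ' => v ξ τ') (vτ ξ τ) (tIval That) τ)
    (hvcont : ContinuousOn (fun q : ℝ × ℝ => v q.1 q.2)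
      (Set.univ ×ˢ tIval That))
    (hvξcont : ContinuousOn (fun q : ℝ × ℝ => vξ q.1 q.2)
      (Set.univ ×ˢ tIval That))
    (hvξξcont : ContinuousOn (fun q : ℝ × ℝ => vξξ q.1 q.2)
      (Set.univ ×ˢ tIval That))
    (hvτcont : ContinuousOn (fun q : ℝ × ℝ => vτ q.1 q.2)
      (Set.univ ×ˢ tIval That))
    (hpde : ∀ (ξ τ : ℝ), 0 < τ → (τ : EReal) < That →
      vτ ξ τ = ν * vξξ ξ τ - |v ξ τ| ^ (p - 1) * Real.sign (v ξ τ) * vξ ξ τ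
        + μ₁ τ * (v ξ τ + (p - 1) * ξ * vξ ξ τ) + μ₃ τ * vξ ξ τ) :
    ∀ (x t : ℝ), 0 < t → (t : EReal) < T →
      deriv (fun s => reconU p α b σ v x s) t =
        ν * deriv (fun y => deriv (fun y' => reconU p α b σ v y' t) y) x
          - |reconU p α b σ v x t| ^ (p - 1) * Real.sign (reconU p α b σ v x t)
            * deriv (fun y => reconU p α b σ v y t) x := by
  intro x t ht0 htT
  have htmem : t ∈ tIval T := ⟨ht0.le, htT⟩
  have hTnhds : tIval T ∈ nhds t := tIval_mem_nhds ht0 htT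
  have hτmem : σ t ∈ tIval That := hσmem t htmem
  -- σ t > 0
  have hσcont : ContinuousOn σ (tIval T) := fun s hs =>
    (hσ' s hs).differentiableWithinAt.continuousWithinAt
  have hσmono : StrictMonoOn σ (tIval T) := by
    apply strictMonoOn_of_deriv_pos (tIval_convex T) hσcont
    intro s hs
    have hsmem : s ∈ tIval T := interior_subset hs
    have hnh : tIval T ∈ nhds s := mem_interior_iff_mem_nhds.1 hs
    have hd : HasDerivAt σ (α (σ s) ^ (2 - 2 * p)) s := (hσ' s hsmem).hasDerivAt hnh
    rw [hd.deriv]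
    exact Real.rpow_pos_of_pos (hαpos _ (hσmem s hsmem)) _
  have h0T : (0:ℝ) ∈ tIval T := ⟨le_refl 0, by exact_mod_cast hT⟩
  have hτpos : 0 < σ t := by
    have := hσmono h0T htmem ht0
    rwa [hσ0] at this
  have hτT : ((σ t : ℝ) : EReal) < That := hτmem.2
  have hThatnhds : tIval That ∈ nhds (σ t) := tIval_mem_nhds hτpos hτT
  have hapos : 0 < α (σ t) := hαpos _ hτmem
  have hane : α (σ t) ≠ 0 := ne_of_gt hapos
  have hwpos : 0 < α (σ t) ^ (1 - p) := Real.rpow_pos_of_pos hapos _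
  -- spatial first derivative
  have hinner : ∀ y : ℝ, HasDerivAt (fun y' : ℝ => α (σ t) ^ (1 - p) * (y' - b (σ t)))
      (α (σ t) ^ (1 - p)) y := by
    intro y
    simpa using ((hasDerivAt_id y).sub_const (b (σ t))).const_mul (α (σ t) ^ (1 - p))
  have hspace : ∀ y : ℝ, HasDerivAt (fun y' => reconU p α b σ v y' t)
      ((α (σ t))⁻¹ * (vξ (α (σ t) ^ (1 - p) * (y - b (σ t))) (σ t) * α (σ t) ^ (1 - p))) y := by
    intro y
    have hcomp : HasDerivAt (fun y' => v (α (σ t) ^ (1 - p) * (y' - b (σ t))) (σ t))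
        (vξ (α (σ t) ^ (1 - p) * (y - b (σ t))) (σ t) * α (σ t) ^ (1 - p)) y := by
      have := HasDerivAt.comp y
        (hvξ (α (σ t) ^ (1 - p) * (y - b (σ t))) (σ t) hτmem) (hinner y)
      exact this
    have := hcomp.const_mul ((α (σ t))⁻¹)
    simpa [reconU] using this
  -- spatial second derivative
  have hfun : (fun y => deriv (fun y' => reconU p α b σ v y' t) y)
      = fun y => (α (σ t))⁻¹ * (vξ (α (σ t) ^ (1 - p) * (y - b (σ t))) (σ t)
        * α (σ t) ^ (1 - p)) := funext fun y => (hspace y).deriv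
  have hspace2 : HasDerivAt (fun y => (α (σ t))⁻¹
      * (vξ (α (σ t) ^ (1 - p) * (y - b (σ t))) (σ t) * α (σ t) ^ (1 - p)))
      ((α (σ t))⁻¹ * (vξξ (α (σ t) ^ (1 - p) * (x - b (σ t))) (σ t) * α (σ t) ^ (1 - p)
        * α (σ t) ^ (1 - p))) x := by
    have hcomp : HasDerivAt (fun y => vξ (α (σ t) ^ (1 - p) * (y - b (σ t))) (σ t))
        (vξξ (α (σ t) ^ (1 - p) * (x - b (σ t))) (σ t) * α (σ t) ^ (1 - p)) x := by
      have := HasDerivAt.comp x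
        (hvξξ (α (σ t) ^ (1 - p) * (x - b (σ t))) (σ t) hτmem) (hinner x)
      exact this
    exact (hcomp.mul_const (α (σ t) ^ (1 - p))).const_mul ((α (σ t))⁻¹)
  -- time derivative
  have hσt : HasDerivAt σ (α (σ t) ^ (2 - 2 * p)) t := (hσ' t htmem).hasDerivAt hTnhds
  have hαt : HasDerivAt α (α (σ t) * μ₁ (σ t)) (σ t) := (hα' _ hτmem).hasDerivAt hThatnhds
  have hbt : HasDerivAt b (α (σ t) ^ (p - 1) * μ₃ (σ t)) (σ t) :=
    (hb' _ hτmem).hasDerivAt hThatnhds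
  have hA : HasDerivAt (fun τ => α τ ^ (1 - p))
      (α (σ t) * μ₁ (σ t) * (1 - p) * α (σ t) ^ (1 - p - 1)) (σ t) :=
    hαt.rpow_const (Or.inl hane)
  have hXi : HasDerivAt (fun τ => α τ ^ (1 - p) * (x - b τ))
      (α (σ t) * μ₁ (σ t) * (1 - p) * α (σ t) ^ (1 - p - 1) * (x - b (σ t))
        + α (σ t) ^ (1 - p) * (0 - α (σ t) ^ (p - 1) * μ₃ (σ t))) (σ t) :=
    hA.mul ((hasDerivAt_const (σ t) x).sub hbt)
  have hvτat : HasDerivAt (fun τ => v (α (σ t) ^ (1 - p) * (x - b (σ t))) τ)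
      (vτ (α (σ t) ^ (1 - p) * (x - b (σ t))) (σ t)) (σ t) :=
    (hvτ _ _ hτmem).hasDerivAt hThatnhds
  have hvξcAt : ContinuousAt (fun q : ℝ × ℝ => vξ q.1 q.2)
      (α (σ t) ^ (1 - p) * (x - b (σ t)), σ t) :=
    hvξcont.continuousAt (prod_mem_nhds Filter.univ_mem hThatnhds)
  have hVcomp : HasDerivAt (fun τ => v (α τ ^ (1 - p) * (x - b τ)) τ)
      (vξ (α (σ t) ^ (1 - p) * (x - b (σ t))) (σ t)
        * (α (σ t) * μ₁ (σ t) * (1 - p) * α (σ t) ^ (1 - p - 1) * (x - b (σ t))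
          + α (σ t) ^ (1 - p) * (0 - α (σ t) ^ (p - 1) * μ₃ (σ t)))
        + vτ (α (σ t) ^ (1 - p) * (x - b (σ t))) (σ t)) (σ t) :=
    chain2 hThatnhds (fun s τ hτ => hvξ s τ hτ) hvτat hvξcAt hXi rfl
  have hInv : HasDerivAt (fun τ => (α τ)⁻¹)
      (-(α (σ t) * μ₁ (σ t)) / α (σ t) ^ 2) (σ t) := hαt.inv hane
  have hG := hInv.mul hVcomp
  have hUt := hG.comp t hσt
  have hUt' : HasDerivAt (fun s => reconU p α b σ v x s)
      ((-(α (σ t) * μ₁ (σ t)) / α (σ t) ^ 2 * v (α (σ t) ^ (1 - p) * (x - b (σ t))) (σ t)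
        + (α (σ t))⁻¹ * (vξ (α (σ t) ^ (1 - p) * (x - b (σ t))) (σ t)
          * (α (σ t) * μ₁ (σ t) * (1 - p) * α (σ t) ^ (1 - p - 1) * (x - b (σ t))
            + α (σ t) ^ (1 - p) * (0 - α (σ t) ^ (p - 1) * μ₃ (σ t)))
          + vτ (α (σ t) ^ (1 - p) * (x - b (σ t))) (σ t)))
        * α (σ t) ^ (2 - 2 * p)) t := by
    exact hUt
  rw [hUt'.deriv, hfun, hspace2.deriv, (hspace x).deriv]
  have hrec : reconU p α b σ v x t
      = (α (σ t))⁻¹ * v (α (σ t) ^ (1 - p) * (x - b (σ t))) (σ t) := rfl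
  rw [hrec]
  rw [hpde (α (σ t) ^ (1 - p) * (x - b (σ t))) (σ t) hτpos hτT]
  -- simplify |u|^{p-1} and sign u
  have habs : |(α (σ t))⁻¹ * v (α (σ t) ^ (1 - p) * (x - b (σ t))) (σ t)| ^ (p - 1)
      = α (σ t) ^ (1 - p) * |v (α (σ t) ^ (1 - p) * (x - b (σ t))) (σ t)| ^ (p - 1) := by
    rw [abs_mul, abs_of_pos (inv_pos.2 hapos),
      Real.mul_rpow (inv_nonneg.2 hapos.le) (abs_nonneg _),
      Real.inv_rpow hapos.le, ← Real.rpow_neg hapos.le,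
      show -(p - 1) = 1 - p by ring]
  have hsign : Real.sign ((α (σ t))⁻¹ * v (α (σ t) ^ (1 - p) * (x - b (σ t))) (σ t))
      = Real.sign (v (α (σ t) ^ (1 - p) * (x - b (σ t))) (σ t)) :=
    real_sign_pos_mul (inv_pos.2 hapos)
  rw [habs, hsign]
  -- rpow identities
  have h1 : α (σ t) ^ (1 - p - 1) = α (σ t) ^ (1 - p) * (α (σ t))⁻¹ := by
    rw [show (1 - p - 1) = (1 - p) + (-1) by ring, Real.rpow_add hapos, Real.rpow_neg_one]
  have h2 : α (σ t) ^ (2 - 2 * p) = α (σ t) ^ (1 - p) * α (σ t) ^ (1 - p) := by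
    rw [show (2 - 2 * p) = (1 - p) + (1 - p) by ring, Real.rpow_add hapos]
  have h3 : α (σ t) ^ (p - 1) = (α (σ t) ^ (1 - p))⁻¹ := by
    rw [← Real.rpow_neg hapos.le, show -(1 - p) = p - 1 by ring]
  rw [h1, h2, h3]
  field_simp
  ring
end

section
/- Let p > 1, ν ∈ ℝ, μ₁ ∈ ℝ with μ₁ ≠ 0, and μ₃ ∈ ℝ. Let v̄ : ℝ → ℝ be twice continuously differentiable and satisfy the stationary co-moving equation 0 = ν·v̄''(ξ) − |v̄(ξ)|^{p−1}·sgn(v̄(ξ))·v̄'(ξ) + μ₁·(v̄(ξ) + (p−1)·ξ·v̄'(ξ)) + μ₃·v̄'(ξ) for all ξ ∈ ℝ. For real t with (2p−2)μ₁t + 1 > 0 define ᾱ(t) = ((2p−2)μ₁t + 1)^{1/(2p−2)} and b̄(t) = μ₃·(ᾱ(t)^{p−1} − 1)/((p−1)μ₁). Then the function u(x,t) = ᾱ(t)⁻¹·v̄(ᾱ(t)^{1−p}·(x − b̄(t))) satisfies u(x,0) = v̄(x) and solves the generalized Burgers' equation u_t(x,t) = ν·u_{xx}(x,t) − |u(x,t)|^{p−1}·sgn(u(x,t))·u_x(x,t)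 for all x ∈ ℝ and all t with (2p−2)μ₁t + 1 > 0. -/
/-- The scaling `ᾱ(t) = ((2p−2)μ₁t + 1)^(1/(2p−2))` of a similarity solution. -/
noncomputable def simA (p μ₁ : ℝ) (t : ℝ) : ℝ :=
  ((2 * p - 2) * μ₁ * t + 1) ^ (1 / (2 * p - 2))

/-- The shift `b̄(t) = μ₃ (ᾱ(t)^(p−1) − 1)/((p−1)μ₁)` of a similarity solution. -/
noncomputable def simB (p μ₁ μ₃ : ℝ) (t : ℝ) : ℝ :=
  μ₃ * (simA p μ₁ t ^ (p - 1) - 1) / ((p - 1) * μ₁)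

/-- The similarity solution `u(x,t) = ᾱ(t)⁻¹ v̄(ᾱ(t)^(1−p)(x − b̄(t)))`. -/
noncomputable def simU (p μ₁ μ₃ : ℝ) (vbar : ℝ → ℝ) (x t : ℝ) : ℝ :=
  (simA p μ₁ t)⁻¹ * vbar (simA p μ₁ t ^ (1 - p) * (x - simB p μ₁ μ₃ t))

/-- If the profile `v̄` solves the stationary co-moving equation
`0 = ν v̄'' − |v̄|^(p−1) sgn(v̄) v̄' + μ₁(v̄ + (p−1)ξ v̄') + μ₃ v̄'`, then the
similarity solution `u(x,t) = ᾱ(t)⁻¹ v̄(ᾱ(t)^(1−p)(x − b̄(t)))` with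
`ᾱ(t) = ((2p−2)μ₁t+1)^(1/(2p−2))` and `b̄(t) = μ₃(ᾱ(t)^(p−1)−1)/((p−1)μ₁)`
satisfies `u(·,0) = v̄` and solves the generalized Burgers' equation
`u_t = ν u_xx − |u|^(p−1) sgn(u) u_x` for all `t` with `(2p−2)μ₁t + 1 > 0`. -/
theorem stmt_18 (p ν μ₁ μ₃ : ℝ) (hp : 1 < p) (hμ : μ₁ ≠ 0)
    (vbar : ℝ → ℝ) (hv : ContDiff ℝ 2 vbar)
    (heq : ∀ ξ : ℝ,
      0 = ν * deriv (deriv vbar) ξ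
        - |vbar ξ| ^ (p - 1) * Real.sign (vbar ξ) * deriv vbar ξ
        + μ₁ * (vbar ξ + (p - 1) * ξ * deriv vbar ξ) + μ₃ * deriv vbar ξ) :
    (∀ x : ℝ, simU p μ₁ μ₃ vbar x 0 = vbar x) ∧
    ∀ (x t : ℝ), 0 < (2 * p - 2) * μ₁ * t + 1 →
      deriv (fun s => simU p μ₁ μ₃ vbar x s) t =
        ν * deriv (fun y => deriv (fun y' => simU p μ₁ μ₃ vbar y' t) y) x
          - |simU p μ₁ μ₃ vbar x t| ^ (p - 1)
            * Real.sign (simU p μ₁ μ₃ vbar x t)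
            * deriv (fun y => simU p μ₁ μ₃ vbar y t) x := by
  have hp1 : (0:ℝ) < p - 1 := by linarith
  have hq : (0:ℝ) < 2 * p - 2 := by linarith
  have hqne : (2 * p - 2 : ℝ) ≠ 0 := ne_of_gt hq
  have hdne : ((p - 1) * μ₁ : ℝ) ≠ 0 := mul_ne_zero (ne_of_gt hp1) hμ
  have hd1 : Differentiable ℝ vbar := hv.differentiable (by norm_num)
  have hd2 : Differentiable ℝ (deriv vbar) := by
    have h2 : ContDiff ℝ ((1:ℕ∞)+1) vbar := by exact_mod_cast hv
    exact (contDiff_succ_iff_deriv.mp h2).2.2.differentiable (by norm_num)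
  constructor
  · intro x
    simp [simU, simA, simB, Real.one_rpow]
  intro x t hst
  have hS0 : (0:ℝ) < (2 * p - 2) * μ₁ * t + 1 := hst
  -- exponent arithmetic
  have e1 : (1 / (2 * p - 2)) * (1 - p) = (-(1/2) : ℝ) := by
    field_simp; ring
  have e2 : (1 / (2 * p - 2)) * (p - 1) = ((1:ℝ)/2) := by
    field_simp
  -- rpow helpers for any τ in the positivity region
  have hApow : ∀ τ : ℝ, 0 < (2 * p - 2) * μ₁ * τ + 1 → ∀ r : ℝ,
      simA p μ₁ τ ^ r = ((2 * p - 2) * μ₁ * τ + 1) ^ ((1 / (2 * p - 2)) * r) := by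
    intro τ hτ r
    rw [simA, ← Real.rpow_mul hτ.le]
  have hAinv : ∀ τ : ℝ, 0 < (2 * p - 2) * μ₁ * τ + 1 →
      (simA p μ₁ τ)⁻¹ = ((2 * p - 2) * μ₁ * τ + 1) ^ (-(1 / (2 * p - 2)) : ℝ) := by
    intro τ hτ
    rw [simA, Real.rpow_neg hτ.le]
  -- simU in explicit form
  have hUeq : ∀ x' τ : ℝ, 0 < (2 * p - 2) * μ₁ * τ + 1 →
      simU p μ₁ μ₃ vbar x' τ =
        ((2 * p - 2) * μ₁ * τ + 1) ^ (-(1 / (2 * p - 2)) : ℝ) *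
          vbar (((2 * p - 2) * μ₁ * τ + 1) ^ (-(1/2) : ℝ) * (x' + μ₃ / ((p - 1) * μ₁))
            - μ₃ / ((p - 1) * μ₁)) := by
    intro x' τ hτ
    have h1 : simA p μ₁ τ ^ (1 - p) = ((2 * p - 2) * μ₁ * τ + 1) ^ (-(1/2) : ℝ) := by
      rw [hApow τ hτ, e1]
    have h2 : simA p μ₁ τ ^ (p - 1) = ((2 * p - 2) * μ₁ * τ + 1) ^ ((1:ℝ)/2) := by
      rw [hApow τ hτ, e2]
    have h3 : ((2 * p - 2) * μ₁ * τ + 1) ^ (-(1/2) : ℝ)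
        * ((2 * p - 2) * μ₁ * τ + 1) ^ ((1:ℝ)/2) = 1 := by
      rw [← Real.rpow_add hτ]; norm_num
    rw [simU, simB, hAinv τ hτ, h1, h2]
    congr 2
    linear_combination (-(μ₃ / ((p - 1) * μ₁))) * h3
  -- abbreviations (plain `have`-style definitions as terms)
  -- W is the co-moving coordinate at (x,t)
  set W : ℝ := ((2 * p - 2) * μ₁ * t + 1) ^ (-(1/2) : ℝ) * (x + μ₃ / ((p - 1) * μ₁))
      - μ₃ / ((p - 1) * μ₁) with hW
  -- derivative of the base affine function
  have hc : HasDerivAt (fun τ : ℝ => (2 * p - 2) * μ₁ * τ + 1) ((2 * p - 2) * μ₁) t := by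
    simpa using ((hasDerivAt_id t).const_mul ((2 * p - 2) * μ₁)).add_const 1
  have hG1 : HasDerivAt (fun τ => ((2 * p - 2) * μ₁ * τ + 1) ^ (-(1 / (2 * p - 2)) : ℝ))
      ((2 * p - 2) * μ₁ * (-(1 / (2 * p - 2))) *
        ((2 * p - 2) * μ₁ * t + 1) ^ (-(1 / (2 * p - 2)) - 1 : ℝ)) t :=
    hc.rpow_const (Or.inl hS0.ne')
  have hG2 : HasDerivAt
      (fun τ => ((2 * p - 2) * μ₁ * τ + 1) ^ (-(1/2) : ℝ) * (x + μ₃ / ((p - 1) * μ₁))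
        - μ₃ / ((p - 1) * μ₁))
      ((2 * p - 2) * μ₁ * (-(1/2)) * ((2 * p - 2) * μ₁ * t + 1) ^ (-(1/2) - 1 : ℝ)
        * (x + μ₃ / ((p - 1) * μ₁))) t :=
    ((hc.rpow_const (Or.inl hS0.ne')).mul_const _).sub_const _
  have hvW : HasDerivAt vbar (deriv vbar W) W := (hd1 W).hasDerivAt
  have hcomp : HasDerivAt
      (fun τ => vbar (((2 * p - 2) * μ₁ * τ + 1) ^ (-(1/2) : ℝ) * (x + μ₃ / ((p - 1) * μ₁))
        - μ₃ / ((p - 1) * μ₁)))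
      (deriv vbar W * ((2 * p - 2) * μ₁ * (-(1/2))
        * ((2 * p - 2) * μ₁ * t + 1) ^ (-(1/2) - 1 : ℝ) * (x + μ₃ / ((p - 1) * μ₁)))) t :=
    hvW.comp t hG2
  have hF : HasDerivAt
      (fun τ => ((2 * p - 2) * μ₁ * τ + 1) ^ (-(1 / (2 * p - 2)) : ℝ) *
        vbar (((2 * p - 2) * μ₁ * τ + 1) ^ (-(1/2) : ℝ) * (x + μ₃ / ((p - 1) * μ₁))
          - μ₃ / ((p - 1) * μ₁)))
      ((2 * p - 2) * μ₁ * (-(1 / (2 * p - 2))) *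
          ((2 * p - 2) * μ₁ * t + 1) ^ (-(1 / (2 * p - 2)) - 1 : ℝ) * vbar W
        + ((2 * p - 2) * μ₁ * t + 1) ^ (-(1 / (2 * p - 2)) : ℝ) *
          (deriv vbar W * ((2 * p - 2) * μ₁ * (-(1/2))
            * ((2 * p - 2) * μ₁ * t + 1) ^ (-(1/2) - 1 : ℝ) * (x + μ₃ / ((p - 1) * μ₁))))) t :=
    hG1.mul hcomp
  -- pass the derivative through the eventual equality
  have hcont : Continuous fun τ : ℝ => (2 * p - 2) * μ₁ * τ + 1 := by continuity
  have hopen : {τ : ℝ | 0 < (2 * p - 2) * μ₁ * τ + 1} ∈ nhds t :=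
    (isOpen_lt continuous_const hcont).mem_nhds hst
  have hev : (fun τ => simU p μ₁ μ₃ vbar x τ) =ᶠ[nhds t]
      (fun τ => ((2 * p - 2) * μ₁ * τ + 1) ^ (-(1 / (2 * p - 2)) : ℝ) *
        vbar (((2 * p - 2) * μ₁ * τ + 1) ^ (-(1/2) : ℝ) * (x + μ₃ / ((p - 1) * μ₁))
          - μ₃ / ((p - 1) * μ₁))) :=
    Filter.eventuallyEq_of_mem hopen (fun τ hτ => hUeq x τ hτ)
  have hderiv_t : HasDerivAt (fun τ => simU p μ₁ μ₃ vbar x τ)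
      ((2 * p - 2) * μ₁ * (-(1 / (2 * p - 2))) *
          ((2 * p - 2) * μ₁ * t + 1) ^ (-(1 / (2 * p - 2)) - 1 : ℝ) * vbar W
        + ((2 * p - 2) * μ₁ * t + 1) ^ (-(1 / (2 * p - 2)) : ℝ) *
          (deriv vbar W * ((2 * p - 2) * μ₁ * (-(1/2))
            * ((2 * p - 2) * μ₁ * t + 1) ^ (-(1/2) - 1 : ℝ) * (x + μ₃ / ((p - 1) * μ₁))))) t :=
    hF.congr_of_eventuallyEq hev
  -- spatial derivative (first order) at every point
  have hux : ∀ y : ℝ, HasDerivAt (fun y' => simU p μ₁ μ₃ vbar y' t)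
      (((2 * p - 2) * μ₁ * t + 1) ^ (-(1 / (2 * p - 2)) : ℝ) *
        (deriv vbar (((2 * p - 2) * μ₁ * t + 1) ^ (-(1/2) : ℝ) * (y + μ₃ / ((p - 1) * μ₁))
            - μ₃ / ((p - 1) * μ₁))
          * ((2 * p - 2) * μ₁ * t + 1) ^ (-(1/2) : ℝ))) y := by
    intro y
    have hfun : (fun y' => simU p μ₁ μ₃ vbar y' t)
        = fun y' => ((2 * p - 2) * μ₁ * t + 1) ^ (-(1 / (2 * p - 2)) : ℝ) *
            vbar (((2 * p - 2) * μ₁ * t + 1) ^ (-(1/2) : ℝ) * (y' + μ₃ / ((p - 1) * μ₁))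
              - μ₃ / ((p - 1) * μ₁)) := by
      funext y'; exact hUeq y' t hst
    rw [hfun]
    have hinner : HasDerivAt
        (fun y' : ℝ => ((2 * p - 2) * μ₁ * t + 1) ^ (-(1/2) : ℝ) * (y' + μ₃ / ((p - 1) * μ₁))
          - μ₃ / ((p - 1) * μ₁))
        (((2 * p - 2) * μ₁ * t + 1) ^ (-(1/2) : ℝ)) y := by
      simpa using (((hasDerivAt_id y).add_const (μ₃ / ((p - 1) * μ₁))).const_mul
        (((2 * p - 2) * μ₁ * t + 1) ^ (-(1/2) : ℝ))).sub_const (μ₃ / ((p - 1) * μ₁))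
    exact (((hd1 _).hasDerivAt.comp y hinner)).const_mul _
  -- second spatial derivative at x
  have hfun2 : (fun y => deriv (fun y' => simU p μ₁ μ₃ vbar y' t) y)
      = fun y => ((2 * p - 2) * μ₁ * t + 1) ^ (-(1 / (2 * p - 2)) : ℝ) *
          (deriv vbar (((2 * p - 2) * μ₁ * t + 1) ^ (-(1/2) : ℝ) * (y + μ₃ / ((p - 1) * μ₁))
              - μ₃ / ((p - 1) * μ₁))
            * ((2 * p - 2) * μ₁ * t + 1) ^ (-(1/2) : ℝ)) := by
    funext y; exact (hux y).deriv
  have hinnerx : HasDerivAt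
      (fun y : ℝ => ((2 * p - 2) * μ₁ * t + 1) ^ (-(1/2) : ℝ) * (y + μ₃ / ((p - 1) * μ₁))
        - μ₃ / ((p - 1) * μ₁))
      (((2 * p - 2) * μ₁ * t + 1) ^ (-(1/2) : ℝ)) x := by
    simpa using (((hasDerivAt_id x).add_const (μ₃ / ((p - 1) * μ₁))).const_mul
      (((2 * p - 2) * μ₁ * t + 1) ^ (-(1/2) : ℝ))).sub_const (μ₃ / ((p - 1) * μ₁))
  have huxx : HasDerivAt
      (fun y => ((2 * p - 2) * μ₁ * t + 1) ^ (-(1 / (2 * p - 2)) : ℝ) *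
        (deriv vbar (((2 * p - 2) * μ₁ * t + 1) ^ (-(1/2) : ℝ) * (y + μ₃ / ((p - 1) * μ₁))
            - μ₃ / ((p - 1) * μ₁))
          * ((2 * p - 2) * μ₁ * t + 1) ^ (-(1/2) : ℝ)))
      (((2 * p - 2) * μ₁ * t + 1) ^ (-(1 / (2 * p - 2)) : ℝ) *
        (deriv (deriv vbar) W * ((2 * p - 2) * μ₁ * t + 1) ^ (-(1/2) : ℝ)
          * ((2 * p - 2) * μ₁ * t + 1) ^ (-(1/2) : ℝ))) x :=
    ((((hd2 W).hasDerivAt.comp x hinnerx)).mul_const _).const_mul _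
  -- rewrite the goal
  rw [hderiv_t.deriv, hfun2, huxx.deriv, (hux x).deriv, hUeq x t hst]
  -- absolute value and sign of the solution
  have hSk : (0:ℝ) < ((2 * p - 2) * μ₁ * t + 1) ^ (-(1 / (2 * p - 2)) : ℝ) :=
    Real.rpow_pos_of_pos hS0 _
  have e3 : (-(1 / (2 * p - 2))) * (p - 1) = (-(1/2) : ℝ) := by
    field_simp
  have habs : |((2 * p - 2) * μ₁ * t + 1) ^ (-(1 / (2 * p - 2)) : ℝ) * vbar W| ^ (p - 1)
      = ((2 * p - 2) * μ₁ * t + 1) ^ (-(1/2) : ℝ) * |vbar W| ^ (p - 1) := by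
    rw [abs_mul, abs_of_pos hSk, Real.mul_rpow hSk.le (abs_nonneg _),
      ← Real.rpow_mul hS0.le, e3]
  have hsign : Real.sign (((2 * p - 2) * μ₁ * t + 1) ^ (-(1 / (2 * p - 2)) : ℝ) * vbar W)
      = Real.sign (vbar W) := by
    rcases lt_trichotomy (vbar W) 0 with h | h | h
    · rw [Real.sign_of_neg h, Real.sign_of_neg (mul_neg_of_pos_of_neg hSk h)]
    · simp [h]
    · rw [Real.sign_of_pos h, Real.sign_of_pos (mul_pos hSk h)]
  rw [habs, hsign]
  -- power splitting
  have r2 : ((2 * p - 2) * μ₁ * t + 1) ^ (-(1 / (2 * p - 2)) - 1 : ℝ)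
      = ((2 * p - 2) * μ₁ * t + 1) ^ (-(1 / (2 * p - 2)) : ℝ)
        * ((2 * p - 2) * μ₁ * t + 1) ^ (-(1/2) : ℝ)
        * ((2 * p - 2) * μ₁ * t + 1) ^ (-(1/2) : ℝ) := by
    rw [show (-(1 / (2 * p - 2)) - 1 : ℝ)
        = (-(1 / (2 * p - 2))) + (-(1/2)) + (-(1/2)) by ring,
      Real.rpow_add hS0, Real.rpow_add hS0]
  have r3 : ((2 * p - 2) * μ₁ * t + 1) ^ (-(1/2) - 1 : ℝ)
      = ((2 * p - 2) * μ₁ * t + 1) ^ (-(1/2) : ℝ)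
        * ((2 * p - 2) * μ₁ * t + 1) ^ (-(1/2) : ℝ)
        * ((2 * p - 2) * μ₁ * t + 1) ^ (-(1/2) : ℝ) := by
    rw [show (-(1/2) - 1 : ℝ) = (-(1/2)) + (-(1/2)) + (-(1/2)) by ring,
      Real.rpow_add hS0, Real.rpow_add hS0]
  rw [r2, r3]
  have hEx : ((2 * p - 2) * μ₁ * t + 1) ^ (-(1/2) : ℝ) * (x + μ₃ / ((p - 1) * μ₁))
      = W + μ₃ / ((p - 1) * μ₁) := by
    rw [hW]; ring
  have hk : (2 * p - 2) * (1 / (2 * p - 2)) = 1 := by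
    field_simp
  have hM : ((p - 1) * μ₁) * (μ₃ / ((p - 1) * μ₁)) = μ₃ := by
    field_simp
  linear_combination
    (((2 * p - 2) * μ₁ * t + 1) ^ (-(1 / (2 * p - 2)) : ℝ)
      * ((2 * p - 2) * μ₁ * t + 1) ^ (-(1/2) : ℝ)
      * ((2 * p - 2) * μ₁ * t + 1) ^ (-(1/2) : ℝ)) * heq W
    + (-((p - 1) * μ₁ * (((2 * p - 2) * μ₁ * t + 1) ^ (-(1 / (2 * p - 2)) : ℝ)
      * ((2 * p - 2) * μ₁ * t + 1) ^ (-(1/2) : ℝ)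
      * ((2 * p - 2) * μ₁ * t + 1) ^ (-(1/2) : ℝ)) * deriv vbar W)) * hEx
    + (-(μ₁ * (((2 * p - 2) * μ₁ * t + 1) ^ (-(1 / (2 * p - 2)) : ℝ)
      * ((2 * p - 2) * μ₁ * t + 1) ^ (-(1/2) : ℝ)
      * ((2 * p - 2) * μ₁ * t + 1) ^ (-(1/2) : ℝ)) * vbar W)) * hk
    + (-((((2 * p - 2) * μ₁ * t + 1) ^ (-(1 / (2 * p - 2)) : ℝ)
      * ((2 * p - 2) * μ₁ * t + 1) ^ (-(1/2) : ℝ)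
      * ((2 * p - 2) * μ₁ * t + 1) ^ (-(1/2) : ℝ)) * deriv vbar W)) * hM
end
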